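/- Let 𝐭 be an index tuple in column standard form with indices from {0,...,k−1} and let 𝒳 be an n×n matrix assignment for 𝐭. View M_𝐭(𝒳) as a k×k block matrix with n×n blocks. Then every block-column of M_𝐭(𝒳) is of the form e_i ⊗ I_n for some 1 ≤ i ≤ k, except possibly the (k−h)-th block-column for each h ∈ heads(𝐭). -/

import Mathlib

/-- The elementary matrix `M_i(B)` (`0 ≤ i ≤ k-1`), as a `k×k` block matrix with `n×n`
blocks: for `i = 0` it is `I_{(k-1)n} ⊕ B`; for `1 ≤ i ≤ k-1` it is
`I_{(k-i-1)n} ⊕ [[B, I],[I, 0]] ⊕ I_{(i-1)n}`. -/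
def elemP (F : Type*) [Field F] (k n : ℕ) (i : ℕ) (B : Matrix (Fin n) (Fin n) F) :
    Matrix (Fin k × Fin n) (Fin k × Fin n) F :=
  Matrix.of fun rc cc =>
    if (rc.1 : ℕ) + i + 1 = k ∧ (cc.1 : ℕ) + i + 1 = k then B rc.2 cc.2
    else if (rc.1 : ℕ) + i + 1 = k ∧ (cc.1 : ℕ) + i = k then (if rc.2 = cc.2 then 1 else 0)
    else if (rc.1 : ℕ) + i = k ∧ (cc.1 : ℕ) + i + 1 = k then (if rc.2 = cc.2 then 1 else 0)
    else if (rc.1 : ℕ) + i = k ∧ (cc.1 : ℕ) + i = k then 0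
    else if rc = cc then 1 else 0

/-- The elementary matrix `M_{-i}(B)` (`1 ≤ i ≤ k`), as a `k×k` block matrix with `n×n`
blocks: for `i = k` it is `B ⊕ I_{(k-1)n}`; for `1 ≤ i ≤ k-1` it is
`I_{(k-i-1)n} ⊕ [[0, I],[I, B]] ⊕ I_{(i-1)n}`. -/
def elemN (F : Type*) [Field F] (k n : ℕ) (i : ℕ) (B : Matrix (Fin n) (Fin n) F) :
    Matrix (Fin k × Fin n) (Fin k × Fin n) F :=
  Matrix.of fun rc cc =>
    if (rc.1 : ℕ) + i = k ∧ (cc.1 : ℕ) + i = k then B rc.2 cc.2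
    else if (rc.1 : ℕ) + i + 1 = k ∧ (cc.1 : ℕ) + i = k then (if rc.2 = cc.2 then 1 else 0)
    else if (rc.1 : ℕ) + i = k ∧ (cc.1 : ℕ) + i + 1 = k then (if rc.2 = cc.2 then 1 else 0)
    else if (rc.1 : ℕ) + i + 1 = k ∧ (cc.1 : ℕ) + i + 1 = k then 0
    else if rc = cc then 1 else 0

/-- The Successor Infix Property: between any two equal indices of the tuple there is an
occurrence of their successor. -/
def SIP (t : List ℕ) : Prop :=
  ∀ a b : Fin t.length, a < b → t.get a = t.get b →
    ∃ c : Fin t.length, a < c ∧ c < b ∧ t.get c = t.get a + 1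

/-- One swap of two adjacent distinct commuting indices (indices differing by ≥ 2). -/
def CommuteStep (t t' : List ℕ) : Prop :=
  ∃ (u v : List ℕ) (x y : ℕ), x ≠ y ∧ x + 1 ≠ y ∧ y + 1 ≠ x ∧
    t = u ++ x :: y :: v ∧ t' = u ++ y :: x :: v

/-- Equivalence of index tuples: generated by swapping adjacent commuting indices. -/
def TupleEquiv : List ℕ → List ℕ → Prop := Relation.ReflTransGen CommuteStep

/-- The string `(a : b) = (a, a+1, ..., b)`. -/
def strTuple (a b : ℕ) : List ℕ := List.range' a (b + 1 - a)

/-- The tuple `(a_s : b_s, ..., a_1 : b_1)` built from a list of pairs of endpoints. -/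
def buildCSF (ps : List (ℕ × ℕ)) : List ℕ :=
  (ps.map fun p => strTuple p.1 p.2).flatten

/-- `ps` encodes a tuple in column standard form: each pair `(a_j, b_j)` has `a_j ≤ b_j`
and the heads `b_s > b_{s-1} > ... > b_1` are strictly decreasing. -/
def IsCSFDecomp (ps : List (ℕ × ℕ)) : Prop :=
  (∀ pr ∈ ps, pr.1 ≤ pr.2) ∧ List.Chain' (· > ·) (ps.map Prod.snd)

/-- The set of heads of an index tuple `t`: the right endpoints of the strings of the
column standard form of `t`. -/
def headsSet (t : List ℕ) : Set ℕ :=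
  {h | ∃ ps, IsCSFDecomp ps ∧ TupleEquiv t (buildCSF ps) ∧ h ∈ ps.map Prod.snd}

/-- The product `M_𝐭(𝒳) = M_{t₁}(X₁) ⋯ M_{t_r}(X_r)` of elementary matrices associated
with the index tuple `t` and the matrix assignment `p ↦ Xf p`. -/
def buildProd (F : Type*) [Field F] (k n : ℕ) (t : List ℕ)
    (Xf : ℕ → Matrix (Fin n) (Fin n) F) : Matrix (Fin k × Fin n) (Fin k × Fin n) F :=
  ((List.range t.length).map fun p => elemP F k n (t.getD p 0) (Xf p)).prod

namespace CSFAux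

/-- One step of the block-column tracking walk: applying `M_t` on the left to a block
column `e_j ⊗ I` yields `e_(j-1) ⊗ I` if `j + t = k`, else `e_j ⊗ I` (assuming no bad hit). -/
def walkStep (k t j : ℕ) : ℕ := if j + t = k then j - 1 else j

/-- Track a block column through the product of elementary matrices (rightmost factor
is processed first, i.e. the tail of the list first). -/
def walk (k : ℕ) : List ℕ → ℕ → ℕ
  | [], c => c
  | t :: l, c => walkStep k t (walk k l c)

/-- The walk never hits the bad column of an elementary factor. -/
def walkOK (k : ℕ) : List ℕ → ℕ → Prop
  | [], _ => True
  | t :: l, c => walkOK k l c ∧ walk k l c + t + 1 ≠ k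

lemma walkStep_le (k t j : ℕ) : walkStep k t j ≤ j := by
  unfold walkStep; split <;> omega

lemma walk_le (k : ℕ) (l : List ℕ) (c : ℕ) : walk k l c ≤ c := by
  induction l with
  | nil => simp [walk]
  | cons t l ih => exact le_trans (walkStep_le _ _ _) ih

lemma walk_append (k : ℕ) (u v : List ℕ) (c : ℕ) :
    walk k (u ++ v) c = walk k u (walk k v c) := by
  induction u with
  | nil => rfl
  | cons t u ih => simp [walk, ih]

lemma walkOK_append (k : ℕ) (u v : List ℕ) (c : ℕ) :
    walkOK k (u ++ v) c ↔ walkOK k v c ∧ walkOK k u (walk k v c) := by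
  induction u with
  | nil => simp [walkOK, walk]
  | cons t u ih => simp only [List.cons_append, List.append_eq, walkOK, ih, walk_append]; tauto

lemma buildProd_nil (F : Type*) [Field F] (k n : ℕ) (Xf : ℕ → Matrix (Fin n) (Fin n) F) :
    buildProd F k n [] Xf = 1 := by
  simp [buildProd]

lemma buildProd_cons (F : Type*) [Field F] (k n : ℕ) (t : ℕ) (l : List ℕ)
    (Xf : ℕ → Matrix (Fin n) (Fin n) F) :
    buildProd F k n (t :: l) Xf
      = elemP F k n t (Xf 0) * buildProd F k n l (fun p => Xf (p + 1)) := by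
  unfold buildProd
  rw [List.length_cons, List.range_succ_eq_map, List.map_cons, List.prod_cons, List.map_map]
  rfl

lemma col_prod (F : Type*) [Field F] (k n : ℕ) :
    ∀ (l : List ℕ) (Xf : ℕ → Matrix (Fin n) (Fin n) F),
      (∀ t ∈ l, t < k) → ∀ c : Fin k, walkOK k l (c : ℕ) →
      ∀ (r : Fin k) (α β : Fin n),
        buildProd F k n l Xf (r, α) (c, β) =
          if (r : ℕ) = walk k l (c : ℕ) ∧ α = β then 1 else 0 := by
  intro l
  induction l with
  | nil =>
    intro Xf _ c _ r α β
    rw [buildProd_nil, Matrix.one_apply]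
    simp [walk, Prod.ext_iff, Fin.val_eq_val]
  | cons t l ih =>
    intro Xf hlt c hok r α β
    obtain ⟨hok', hbad⟩ := hok
    have ht : t < k := hlt t (List.mem_cons_self)
    have hjk : walk k l (c : ℕ) < k := lt_of_le_of_lt (walk_le k l c) c.isLt
    set j := walk k l (c : ℕ) with hj
    rw [buildProd_cons, Matrix.mul_apply]
    rw [Finset.sum_eq_single ((⟨j, hjk⟩ : Fin k), β)]
    · rw [ih _ (fun s hs => hlt s (List.mem_cons_of_mem _ hs)) c hok']
      have hcnd : ((⟨j, hjk⟩ : Fin k) : ℕ) = walk k l (c : ℕ) ∧ β = β := ⟨hj ▸ rfl, rfl⟩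
      rw [if_pos hcnd, mul_one]
      show elemP F k n t (Xf 0) (r, α) (⟨j, hjk⟩, β)
          = if (r : ℕ) = walkStep k t j ∧ α = β then 1 else 0
      simp only [elemP, Matrix.of_apply, Prod.mk.injEq, Fin.ext_iff]
      unfold walkStep
      by_cases hab : α = β
      · subst hab
        simp only [and_true]
        split_ifs <;> first | rfl | omega
      · have hab' : ¬ ((α : ℕ) = (β : ℕ)) := fun h => hab (Fin.ext h)
        simp only [hab', and_false, if_false]
        split_ifs <;> first | rfl | omega
    · intro x _ hx
      rw [ih _ (fun s hs => hlt s (List.mem_cons_of_mem _ hs)) c hok']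
      rw [← hj, if_neg, mul_zero]
      rintro ⟨h1, h2⟩
      exact hx (by ext <;> simp [h1, h2])
    · intro h
      exact absurd (Finset.mem_univ _) h

lemma walk_strTuple (k : ℕ) : ∀ (m a j : ℕ), a + m < k → j < k → j + a + m + 1 ≠ k →
    walkOK k (List.range' a (m + 1)) j ∧
      walk k (List.range' a (m + 1)) j = if k ≤ j + a + m ∧ j + a ≤ k then j - 1 else j := by
  intro m
  induction m with
  | zero =>
    intro a j hak hj hbad
    rw [List.range'_one]
    refine ⟨⟨trivial, ?_⟩, ?_⟩
    · show j + a + 1 ≠ k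
      omega
    · show walkStep k a j = _
      unfold walkStep
      split_ifs <;> omega
  | succ m ih =>
    intro a j hak hj hbad
    rw [List.range'_succ]
    obtain ⟨hok, hw⟩ := ih (a + 1) j (by omega) hj (by omega)
    refine ⟨⟨hok, ?_⟩, ?_⟩
    · rw [hw]; split_ifs <;> omega
    · show walkStep k a (walk k (List.range' (a + 1) (m + 1)) j) = _
      rw [hw]
      unfold walkStep
      split_ifs <;> omega

lemma walk_buildCSF (k : ℕ) : ∀ ps : List (ℕ × ℕ), IsCSFDecomp ps →
    (∀ pr ∈ ps, pr.2 < k) → ∀ c : ℕ, c < k → (∀ h ∈ ps.map Prod.snd, c + h + 1 ≠ k) →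
    walkOK k (buildCSF ps) c ∧
      (walk k (buildCSF ps) c = c ∨
        ∀ b, (∀ h ∈ ps.map Prod.snd, h < b) → k < walk k (buildCSF ps) c + b + 1) := by
  intro ps
  induction ps with
  | nil =>
    intro _ _ c hc _
    exact ⟨trivial, Or.inl rfl⟩
  | cons pr ps ih =>
    intro hcsf hk c hc hheads
    have hpair : pr.1 ≤ pr.2 := hcsf.1 _ (List.mem_cons_self)
    have hchain : List.Pairwise (· > ·) ((pr :: ps).map Prod.snd) :=
      List.isChain_iff_pairwise.mp hcsf.2
    rw [List.map_cons, List.pairwise_cons] at hchain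
    have hgt : ∀ h ∈ ps.map Prod.snd, h < pr.2 := hchain.1
    have hcsf' : IsCSFDecomp ps :=
      ⟨fun q hq => hcsf.1 q (List.mem_cons_of_mem _ hq),
        List.isChain_iff_pairwise.mpr hchain.2⟩
    obtain ⟨hok, hinv⟩ := ih hcsf' (fun q hq => hk q (List.mem_cons_of_mem _ hq)) c hc
      (fun h hh => hheads h (List.mem_cons_of_mem _ hh))
    have hjle : walk k (buildCSF ps) c ≤ c := walk_le k _ c
    set j := walk k (buildCSF ps) c with hjdef
    have hb2 : pr.2 < k := hk pr (List.mem_cons_self)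
    have hbad : j + pr.2 + 1 ≠ k := by
      rcases hinv with h | h
      · rw [h]; exact hheads pr.2 (by simp)
      · have := h pr.2 hgt; omega
    obtain ⟨hok2, hw2⟩ := walk_strTuple k (pr.2 - pr.1) pr.1 j (by omega)
      (lt_of_le_of_lt hjle hc) (by omega)
    have hstr : strTuple pr.1 pr.2 = List.range' pr.1 (pr.2 - pr.1 + 1) := by
      unfold strTuple; congr 1; omega
    have hbc : buildCSF (pr :: ps) = strTuple pr.1 pr.2 ++ buildCSF ps := by
      simp [buildCSF]
    constructor
    · rw [hbc, walkOK_append]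
      exact ⟨hok, by rw [hstr, ← hjdef]; exact hok2⟩
    · rw [hbc, walk_append, hstr, ← hjdef, hw2]
      split_ifs with hcond
      · -- shift: prove right disjunct
        right
        intro b hb
        have hbpr : pr.2 < b := hb pr.2 (by simp)
        omega
      · rcases hinv with h | h
        · exact Or.inl h
        · right
          intro b hb
          exact h b (fun h' hh' => hb h' (List.mem_cons_of_mem _ hh'))

lemma mem_buildCSF_lt (k : ℕ) (ps : List (ℕ × ℕ)) (hcsf : IsCSFDecomp ps)
    (hk : ∀ pr ∈ ps, pr.2 < k) : ∀ t ∈ buildCSF ps, t < k := by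
  intro t ht
  simp only [buildCSF, List.mem_flatten, List.mem_map] at ht
  obtain ⟨l, ⟨pr, hpr, rfl⟩, htl⟩ := ht
  unfold strTuple at htl
  rw [List.mem_range'_1] at htl
  have := hk pr hpr
  have := hcsf.1 pr hpr
  omega

end CSFAux

/-- Lemma: for a tuple `t` in column standard form (encoded by `ps`) with indices from
`{0,…,k-1}` and any matrix assignment, every block-column of `M_𝐭(𝒳)` is of the form
`e_i ⊗ Iₙ`, except possibly the `(k-h)`-th block-column for each head `h` of `t`. -/
theorem csf_product_block_columns (F : Type*) [Field F] (k n : ℕ)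
    (ps : List (ℕ × ℕ)) (hps : IsCSFDecomp ps) (hk : ∀ pr ∈ ps, pr.2 < k)
    (Xf : ℕ → Matrix (Fin n) (Fin n) F) :
    ∀ c : Fin k, (¬ ∃ h ∈ ps.map Prod.snd, (c : ℕ) + h + 1 = k) →
      ∃ i : Fin k, ∀ (r : Fin k) (α β : Fin n),
        buildProd F k n (buildCSF ps) Xf (r, α) (c, β) =
          if r = i ∧ α = β then 1 else 0 := by
  intro c hc
  push_neg at hc
  obtain ⟨hok, _⟩ := CSFAux.walk_buildCSF k ps hps hk c c.isLt hc
  have hlt := CSFAux.mem_buildCSF_lt k ps hps hk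
  refine ⟨⟨CSFAux.walk k (buildCSF ps) c,
    lt_of_le_of_lt (CSFAux.walk_le k _ c) c.isLt⟩, ?_⟩
  intro r α β
  rw [CSFAux.col_prod F k n (buildCSF ps) Xf hlt c hok r α β]
  congr 1
  simp [Fin.ext_iff]
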